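/- (Zone II-1, case I: degenerate ℓ₁-equilibrium) Let Y₁, Y₂, q₁, ρ > 0, define h(x) = (1/q₁)·(Y₁ + Y₂·x/(x + ρ)) for x ≥ 0, and set p₁∞ = (1/(2·q₁))·(Y₁ + Y₂ − ρ·q₁ + √((Y₁ + Y₂ − ρ·q₁)² + 4·ρ·q₁·Y₁)). Then: (i) p₁∞ > 0 and h(p₁∞) = p₁∞; (ii) for every initial value p₀ with Y₁/p₀ + Y₂/(p₀ + ρ) < q₁ (equivalently p₀ > p₁∞), the sequence defined by p_{t+1} = h(p_t) is strictly decreasing and converges monotonically to p₁∞ as t → ∞. -/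

import Mathlib

open Filter

noncomputable section

/-- The downward price-adjustment map for `p₁` in zone II-1 (case `Δp < −ρ`). -/
def hmap (Y1 Y2 q1 ρ x : ℝ) : ℝ := (Y1 + Y2 * (x / (x + ρ))) / q1

/-- The limit price `p₁∞` defining the degenerate ℓ₁-equilibrium. -/
def p1inf (Y1 Y2 q1 ρ : ℝ) : ℝ :=
  (Y1 + Y2 - ρ * q1 + Real.sqrt ((Y1 + Y2 - ρ * q1) ^ 2 + 4 * ρ * q1 * Y1)) / (2 * q1)

lemma key (Y1 Y2 q1 ρ : ℝ) (hY1 : 0 < Y1) (hY2 : 0 < Y2) (hq1 : 0 < q1) (hρ : 0 < ρ) :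
    0 < p1inf Y1 Y2 q1 ρ ∧
    q1 * (p1inf Y1 Y2 q1 ρ)^2 + (ρ*q1 - Y1 - Y2) * p1inf Y1 Y2 q1 ρ - ρ * Y1 = 0 := by
  unfold p1inf
  set b := Y1 + Y2 - ρ * q1 with hb
  set s := Real.sqrt (b ^ 2 + 4 * ρ * q1 * Y1) with hs
  have hD : 0 < b ^ 2 + 4 * ρ * q1 * Y1 := by positivity
  have hs0 : 0 ≤ s := Real.sqrt_nonneg _
  have hs2 : s ^ 2 = b ^ 2 + 4 * ρ * q1 * Y1 := Real.sq_sqrt hD.le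
  have hsp : 0 < s := Real.sqrt_pos.mpr hD
  have hsb : b < s := by
    by_contra hc
    push_neg at hc
    have h2 : s ^ 2 ≤ b ^ 2 := pow_le_pow_left₀ hs0 hc 2
    nlinarith [mul_pos (mul_pos hρ hq1) hY1]
  have hbs : 0 < b + s := by nlinarith
  constructor
  · positivity
  · field_simp
    linear_combination hs2


/-- Zone II-1, case I (degenerate ℓ₁-equilibrium): `p₁∞` is a positive fixed point
of `h`, for positive prices the condition `Y₁/p₀ + Y₂/(p₀+ρ) < q₁` is equivalent to
`p₀ > p₁∞`, and every orbit of `h` started at such a `p₀` decreases strictly and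
converges monotonically to `p₁∞`. -/
theorem degenerate_ell1_equilibrium (Y1 Y2 q1 ρ : ℝ)
    (hY1 : 0 < Y1) (hY2 : 0 < Y2) (hq1 : 0 < q1) (hρ : 0 < ρ) :
    0 < p1inf Y1 Y2 q1 ρ ∧
    hmap Y1 Y2 q1 ρ (p1inf Y1 Y2 q1 ρ) = p1inf Y1 Y2 q1 ρ ∧
    (∀ p0 : ℝ, 0 < p0 →
      (Y1 / p0 + Y2 / (p0 + ρ) < q1 ↔ p1inf Y1 Y2 q1 ρ < p0)) ∧
    (∀ p : ℕ → ℝ, 0 < p 0 → Y1 / p 0 + Y2 / (p 0 + ρ) < q1 →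
      (∀ t, p (t + 1) = hmap Y1 Y2 q1 ρ (p t)) →
      StrictAnti p ∧ Tendsto p atTop (nhds (p1inf Y1 Y2 q1 ρ))) := by
  obtain ⟨hL0, hquad⟩ := key Y1 Y2 q1 ρ hY1 hY2 hq1 hρ
  set L := p1inf Y1 Y2 q1 ρ with hLdef
  have hLρ : 0 < L + ρ := by linarith
  -- the second factor of the quadratic is positive
  have hfac : 0 < q1 * L + (ρ * q1 - Y1 - Y2) := by nlinarith [mul_pos hρ hY1]
  -- fixed point
  have hfix : hmap Y1 Y2 q1 ρ L = L := by
    unfold hmap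
    field_simp
    linear_combination -hquad
  -- equivalence
  have hequiv : ∀ x : ℝ, 0 < x → (Y1 / x + Y2 / (x + ρ) < q1 ↔ L < x) := by
    intro x hx
    have hxρ : 0 < x + ρ := by linarith
    rw [div_add_div _ _ (ne_of_gt hx) (ne_of_gt hxρ), div_lt_iff₀ (by positivity)]
    constructor
    · intro h
      by_contra hc
      push_neg at hc
      nlinarith [mul_pos hq1 hx]
    · intro h
      nlinarith [mul_pos hq1 hx]
  -- strict monotonicity of hmap on positives
  have hmono : ∀ a c : ℝ, 0 < a → a < c → hmap Y1 Y2 q1 ρ a < hmap Y1 Y2 q1 ρ c := by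
    intro a c ha hac
    have haρ : 0 < a + ρ := by linarith
    have hcρ : 0 < c + ρ := by linarith
    have h1 : a / (a + ρ) < c / (c + ρ) := by
      rw [div_lt_div_iff₀ haρ hcρ]; nlinarith
    unfold hmap
    gcongr
  -- the map decreases beyond L
  have hdec : ∀ x : ℝ, L < x → hmap Y1 Y2 q1 ρ x < x := by
    intro x hLx
    have hx : 0 < x := lt_trans hL0 hLx
    have hxρ : 0 < x + ρ := by linarith
    have hcond := (hequiv x hx).mpr hLx
    unfold hmap
    rw [div_lt_iff₀ hq1]
    have hrw : Y1 + Y2 * (x / (x + ρ)) = x * (Y1 / x + Y2 / (x + ρ)) := by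
      field_simp
    rw [hrw]
    calc x * (Y1 / x + Y2 / (x + ρ)) < x * q1 := by
          exact mul_lt_mul_of_pos_left hcond hx
      _ = x * q1 := rfl
  refine ⟨hL0, hfix, fun p0 h => hequiv p0 h, ?_⟩
  intro p hp0 hcond0 hrec
  have hinv : ∀ t, L < p t := by
    intro t
    induction t with
    | zero => exact (hequiv (p 0) hp0).mp hcond0
    | succ n ih =>
      rw [hrec n, ← hfix]
      exact hmono L (p n) hL0 ih
  have hstep : ∀ t, p (t + 1) < p t := by
    intro t
    rw [hrec t]
    exact hdec (p t) (hinv t)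
  have hanti : StrictAnti p := strictAnti_nat_of_succ_lt hstep
  refine ⟨hanti, ?_⟩
  have hbdd : BddBelow (Set.range p) := ⟨L, by rintro _ ⟨t, rfl⟩; exact (hinv t).le⟩
  have htend : Tendsto p atTop (nhds (⨅ t, p t)) := tendsto_atTop_ciInf hanti.antitone hbdd
  set ℓ := ⨅ t, p t with hℓdef
  have hLℓ : L ≤ ℓ := le_ciInf fun t => (hinv t).le
  have hℓρ : ℓ + ρ ≠ 0 := ne_of_gt (by linarith : (0:ℝ) < ℓ + ρ)
  -- ℓ is a fixed point
  have hT1 : Tendsto (fun t => p (t + 1)) atTop (nhds ℓ) :=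
    htend.comp (tendsto_add_atTop_nat 1)
  have hT2 : Tendsto (fun t => hmap Y1 Y2 q1 ρ (p t)) atTop (nhds (hmap Y1 Y2 q1 ρ ℓ)) := by
    unfold hmap
    exact ((tendsto_const_nhds.add (tendsto_const_nhds.mul
      (htend.div (htend.add tendsto_const_nhds) hℓρ))).div_const q1)
  have hfixℓ : hmap Y1 Y2 q1 ρ ℓ = ℓ := by
    have : (fun t => p (t + 1)) = fun t => hmap Y1 Y2 q1 ρ (p t) := funext hrec
    rw [this] at hT1
    exact tendsto_nhds_unique hT2 hT1
  have hℓL : ℓ = L := by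
    rcases eq_or_lt_of_le hLℓ with h | h
    · exact h.symm
    · exact absurd hfixℓ (ne_of_lt (hdec ℓ h))
  rw [← hℓL]
  exact htend
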